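/- arXiv:1105.2504 — 2 statements merged into one kernel-verified Lean document; each statement's English description precedes it below -/
import Mathlib

section
/- Let (a_n)_{n≥1} be a sequence of nonnegative reals and λ ∈ (0,1) such that a_{n+1} ≤ (λ/n) Σ_{i=1}^n a_i for every n ≥ 1. Then a_n ≤ a_1 ∏_{j=1}^{n-1} (1 - (1-λ)/j) for all n ≥ 1, and in particular a_n → 0 as n → ∞. -/
open Finset Filter Real

theorem recursive_sequence_decay (a : ℕ → ℝ) (ha : ∀ n, 1 ≤ n → 0 ≤ a n)
    (lam : ℝ) (hlam0 : 0 < lam) (hlam1 : lam < 1)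
    (hrec : ∀ n : ℕ, 1 ≤ n → a (n + 1) ≤ lam / n * ∑ i ∈ Finset.Icc 1 n, a i) :
    (∀ n : ℕ, 1 ≤ n →
      a n ≤ a 1 * ∏ j ∈ Finset.Icc 1 (n - 1), (1 - (1 - lam) / (j : ℝ))) ∧
    Filter.Tendsto (fun n => a n) Filter.atTop (nhds 0) := by
  have ha1 : 0 ≤ a 1 := ha 1 le_rfl
  -- bound on partial sums
  have hS : ∀ m : ℕ, ∑ i ∈ Icc 1 (m + 1), a i ≤
      a 1 * ∏ j ∈ Icc 1 m, (((j : ℝ) + lam) / j) := by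
    intro m
    induction m with
    | zero => simp
    | succ m ih =>
      have hm1 : (0:ℝ) < (m:ℝ) + 1 := by positivity
      have hsum : ∑ i ∈ Icc 1 (m + 2), a i = (∑ i ∈ Icc 1 (m+1), a i) + a (m + 2) :=
        Finset.sum_Icc_succ_top (by omega) a
      have hSn0 : 0 ≤ ∑ i ∈ Icc 1 (m+1), a i :=
        Finset.sum_nonneg fun i hi => ha i (mem_Icc.mp hi).1
      have hrec' := hrec (m+1) (by omega)
      push_cast at hrec'
      have hfac : (0:ℝ) ≤ ((m:ℝ) + 1 + lam) / ((m:ℝ) + 1) := by positivity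
      have step : ∑ i ∈ Icc 1 (m + 2), a i ≤
          (∑ i ∈ Icc 1 (m+1), a i) * (((m:ℝ) + 1 + lam) / ((m:ℝ)+1)) := by
        rw [hsum]
        have heq : (∑ i ∈ Icc 1 (m+1), a i) + lam / ((m:ℝ)+1) * ∑ i ∈ Icc 1 (m+1), a i
            = (∑ i ∈ Icc 1 (m+1), a i) * (((m:ℝ) + 1 + lam) / ((m:ℝ)+1)) := by
          field_simp
        have : a (m + 2) ≤ lam / ((m:ℝ)+1) * ∑ i ∈ Icc 1 (m+1), a i := by
          convert hrec' using 2 <;> push_cast <;> ring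
        linarith [heq ▸ (by linarith : (∑ i ∈ Icc 1 (m+1), a i) + a (m+2) ≤
          (∑ i ∈ Icc 1 (m+1), a i) + lam / ((m:ℝ)+1) * ∑ i ∈ Icc 1 (m+1), a i)]
      calc ∑ i ∈ Icc 1 (m + 2), a i
          ≤ (∑ i ∈ Icc 1 (m+1), a i) * (((m:ℝ) + 1 + lam) / ((m:ℝ)+1)) := step
        _ ≤ (a 1 * ∏ j ∈ Icc 1 m, (((j : ℝ) + lam) / j)) * (((m:ℝ) + 1 + lam) / ((m:ℝ)+1)) :=
            mul_le_mul_of_nonneg_right ih hfac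
        _ = a 1 * ∏ j ∈ Icc 1 (m+1), (((j : ℝ) + lam) / j) := by
            rw [Finset.prod_Icc_succ_top (by omega)]
            push_cast; ring
  -- product identity
  have hid : ∀ m : ℕ, ∏ j ∈ Icc 1 (m + 1), (1 - (1 - lam) / (j : ℝ)) =
      lam / ((m:ℝ) + 1) * ∏ j ∈ Icc 1 m, (((j : ℝ) + lam) / j) := by
    intro m
    induction m with
    | zero => simp
    | succ m ih =>
      have hm1 : ((m:ℝ) + 1) ≠ 0 := by positivity
      have hm2 : ((m:ℝ) + 2) ≠ 0 := by positivity
      rw [Finset.prod_Icc_succ_top (show 1 ≤ m + 2 by omega), ih,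
        Finset.prod_Icc_succ_top (show 1 ≤ m + 1 by omega)]
      push_cast
      field_simp
      ring
  -- main pointwise bound
  have hmain : ∀ n : ℕ, 1 ≤ n →
      a n ≤ a 1 * ∏ j ∈ Icc 1 (n - 1), (1 - (1 - lam) / (j : ℝ)) := by
    intro n hn
    match n, hn with
    | 1, _ => simp
    | (m+2), _ =>
      have hm1 : (0:ℝ) < (m:ℝ) + 1 := by positivity
      have hrec' := hrec (m+1) (by omega)
      push_cast at hrec'
      have hS' := hS m
      have hlampos : (0:ℝ) ≤ lam / ((m:ℝ)+1) := by positivity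
      calc a (m+2) ≤ lam / ((m:ℝ)+1) * ∑ i ∈ Icc 1 (m+1), a i := by
            convert hrec' using 2 <;> push_cast <;> ring
        _ ≤ lam / ((m:ℝ)+1) * (a 1 * ∏ j ∈ Icc 1 m, (((j : ℝ) + lam) / j)) :=
            mul_le_mul_of_nonneg_left hS' hlampos
        _ = a 1 * ∏ j ∈ Icc 1 (m+1), (1 - (1 - lam) / (j : ℝ)) := by
            rw [hid m]; ring
        _ = a 1 * ∏ j ∈ Icc 1 ((m+2) - 1), (1 - (1 - lam) / (j : ℝ)) := by norm_num
  refine ⟨hmain, ?_⟩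
  -- the product is bounded by exp of minus harmonic sum
  have hprodle : ∀ m : ℕ, ∏ j ∈ Icc 1 m, (1 - (1 - lam) / (j : ℝ)) ≤
      Real.exp (∑ j ∈ Icc 1 m, (-(1 - lam) / (j : ℝ))) := by
    intro m
    rw [Real.exp_sum]
    apply Finset.prod_le_prod
    · intro j hj
      have hj1 : 1 ≤ j := (mem_Icc.mp hj).1
      have hj' : (1:ℝ) ≤ (j:ℝ) := by exact_mod_cast hj1
      have : (1 - lam) / (j:ℝ) ≤ 1 - lam := by
        apply div_le_self (by linarith) hj'
      linarith
    · intro j hj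
      have h1 := Real.add_one_le_exp (-(1 - lam) / (j : ℝ))
      have h2 : -(1 - lam) / (j:ℝ) = -((1 - lam)/(j:ℝ)) := neg_div _ _
      linarith
  -- the exponent tends to -infinity
  have hharm : Tendsto (fun m : ℕ => ∑ j ∈ Icc 1 m, 1 / (j : ℝ)) atTop atTop := by
    have heq : ∀ m : ℕ, ∑ j ∈ Icc 1 m, 1 / (j : ℝ) = ∑ i ∈ range m, (1 / ((i:ℝ) + 1)) := by
      intro m
      induction m with
      | zero => simp
      | succ m ih =>
        rw [Finset.sum_Icc_succ_top (by omega), ih, Finset.sum_range_succ]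
        push_cast; ring
    simpa only [heq] using tendsto_sum_range_one_div_nat_succ_atTop
  have hexp : Tendsto (fun m : ℕ => Real.exp (∑ j ∈ Icc 1 m, (-(1 - lam) / (j : ℝ))))
      atTop (nhds 0) := by
    have heq : ∀ m : ℕ, (∑ j ∈ Icc 1 m, (-(1 - lam) / (j : ℝ)))
        = (-(1 - lam)) * ∑ j ∈ Icc 1 m, 1 / (j : ℝ) := by
      intro m
      rw [Finset.mul_sum]
      apply Finset.sum_congr rfl
      intro j _
      ring
    simp only [heq]
    exact Real.tendsto_exp_atBot.comp
      (hharm.const_mul_atTop_of_neg (by linarith))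
  -- assemble: squeeze
  have hg : Tendsto (fun n : ℕ => a 1 * Real.exp (∑ j ∈ Icc 1 (n - 1), (-(1 - lam) / (j : ℝ))))
      atTop (nhds 0) := by
    have := (hexp.comp (tendsto_sub_atTop_nat 1)).const_mul (a 1)
    simpa using this
  apply squeeze_zero' (g := fun n : ℕ =>
      a 1 * Real.exp (∑ j ∈ Icc 1 (n - 1), (-(1 - lam) / (j : ℝ)))) ?_ ?_ hg
  · filter_upwards [eventually_ge_atTop 1] with n hn
    exact ha n hn
  · filter_upwards [eventually_ge_atTop 1] with n hn
    calc a n ≤ a 1 * ∏ j ∈ Icc 1 (n - 1), (1 - (1 - lam) / (j : ℝ)) := hmain n hn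
      _ ≤ a 1 * Real.exp (∑ j ∈ Icc 1 (n - 1), (-(1 - lam) / (j : ℝ))) :=
          mul_le_mul_of_nonneg_left (hprodle (n-1)) ha1
end

section
/- Let p ∈ (2, ∞) and let ω: ℝ^d → ℝ satisfy |ξ|^p ≤ ω(ξ) ≤ ω̄|ξ|^p with ω̄ ≥ 1. Define, for symmetric d×d matrices Ξ, Ω(Ξ) = inf { Σ_{j=1}^d ω(ξ_j) : Ξ = Σ_{j=1}^d τ_j ξ_j ξ_jᵀ, ξ_j ∈ ℝ^d, τ_j ∈ {±1} }. Then d^{-(p/2-1)} ‖Ξ‖_1^{p/2} ≤ Ω(Ξ) ≤ ω̄ ‖Ξ‖_1^{p/2} for every symmetric Ξ, where ‖Ξ‖_1 is the sum of absolute values of the eigenvalues of Ξ. -/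
open Matrix

/-- The Euclidean norm of a vector in `Fin d → ℝ`. -/
noncomputable def eNorm {d : ℕ} (v : Fin d → ℝ) : ℝ := Real.sqrt (∑ i, (v i) ^ 2)

/-- The matrix weight function `Ω(Ξ)` built from a vector weight `ω`, defined as the
infimum of `∑ ω(ξ_j)` over signed rank-one decompositions `Ξ = ∑ τ_j ξ_j ξ_jᵀ`. -/
noncomputable def matOmega {d : ℕ} (w : (Fin d → ℝ) → ℝ)
    (X : Matrix (Fin d) (Fin d) ℝ) : ℝ :=
  sInf {s : ℝ | ∃ (ξ : Fin d → Fin d → ℝ) (τ : Fin d → ℝ),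
    (∀ j, τ j = 1 ∨ τ j = -1) ∧
    X = ∑ j, τ j • Matrix.vecMulVec (ξ j) (ξ j) ∧
    s = ∑ j, w (ξ j)}

lemma spectral_sum {d : ℕ} {X : Matrix (Fin d) (Fin d) ℝ} (hX : X.IsHermitian) :
    X = ∑ j, hX.eigenvalues j •
      Matrix.vecMulVec (⇑(hX.eigenvectorBasis j)) (⇑(hX.eigenvectorBasis j)) := by
  conv_lhs => rw [hX.spectral_theorem]
  ext i k
  simp only [Matrix.mul_apply, Matrix.mul_diagonal, Matrix.diagonal_apply, Matrix.sum_apply,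
    Matrix.smul_apply, vecMulVec_apply, Matrix.star_apply, Matrix.IsHermitian.eigenvectorUnitary_apply,
    Function.comp_apply, RCLike.star_def, smul_eq_mul, Unitary.conjStarAlgAut_apply]
  refine Finset.sum_congr rfl fun j _ => ?_
  simp [mul_comm, mul_assoc, mul_left_comm]

lemma ortho_dot {d : ℕ} {X : Matrix (Fin d) (Fin d) ℝ} (hX : X.IsHermitian) (i j : Fin d) :
    ∑ k, hX.eigenvectorBasis i k * hX.eigenvectorBasis j k = if i = j then 1 else 0 := by
  have h := (orthonormal_iff_ite (𝕜 := ℝ)).mp hX.eigenvectorBasis.orthonormal i j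
  simpa [PiLp.inner_apply, RCLike.inner_apply, starRingEnd_apply, mul_comm] using h

lemma parseval {d : ℕ} {X : Matrix (Fin d) (Fin d) ℝ} (hX : X.IsHermitian) (v : Fin d → ℝ) :
    ∑ j, (∑ i, hX.eigenvectorBasis j i * v i) ^ 2 = ∑ i, v i ^ 2 := by
  have h := hX.eigenvectorBasis.sum_inner_mul_inner ((WithLp.equiv 2 (Fin d → ℝ)).symm v)
    ((WithLp.equiv 2 (Fin d → ℝ)).symm v)
  simp only [PiLp.inner_apply, RCLike.inner_apply, starRingEnd_apply, star_trivial,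
    WithLp.equiv_symm_apply, PiLp.toLp_apply] at h
  calc ∑ j, (∑ i, hX.eigenvectorBasis j i * v i) ^ 2
      = ∑ j, (∑ i, v i * hX.eigenvectorBasis j i) * (∑ i, hX.eigenvectorBasis j i * v i) := by
        refine Finset.sum_congr rfl fun j _ => ?_
        rw [sq]; congr 1; exact Finset.sum_congr rfl fun i _ => mul_comm _ _
    _ = ∑ i, v i * v i := by rw [← h]; exact Finset.sum_congr rfl fun j _ => mul_comm _ _
    _ = ∑ i, v i ^ 2 := by simp [sq]

lemma eig_eq {d : ℕ} {X : Matrix (Fin d) (Fin d) ℝ} (hX : X.IsHermitian)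
    (ξ : Fin d → Fin d → ℝ) (τ : Fin d → ℝ)
    (hdec : X = ∑ j, τ j • Matrix.vecMulVec (ξ j) (ξ j)) (i : Fin d) :
    hX.eigenvalues i = ∑ j, τ j * (∑ k, hX.eigenvectorBasis i k * ξ j k) ^ 2 := by
  set u : Fin d → ℝ := fun k => hX.eigenvectorBasis i k with hu
  have h1 : X *ᵥ u = hX.eigenvalues i • u := hX.mulVec_eigenvectorBasis i
  have h2 : u ⬝ᵥ (X *ᵥ u) = hX.eigenvalues i := by
    rw [h1]
    have : u ⬝ᵥ (hX.eigenvalues i • u) = hX.eigenvalues i * ∑ k, u k * u k := by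
      simp [dotProduct, Finset.mul_sum]; ring_nf
      exact Finset.sum_congr rfl fun k _ => by ring
    rw [this]
    have h3 := ortho_dot hX i i
    simp only [if_true, eq_self_iff_true] at h3
    rw [hu, h3, mul_one]
  rw [← h2]
  conv_lhs => rw [hdec]
  have hmv : ((∑ j, τ j • Matrix.vecMulVec (ξ j) (ξ j)) *ᵥ u)
      = ∑ j, τ j • (Matrix.vecMulVec (ξ j) (ξ j) *ᵥ u) := by
    ext x
    simp only [mulVec, dotProduct, Matrix.sum_apply, Matrix.smul_apply, vecMulVec_apply,
      smul_eq_mul, Finset.sum_apply, Pi.smul_apply, Finset.sum_mul, Finset.mul_sum]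
    rw [Finset.sum_comm]
    exact Finset.sum_congr rfl fun a _ => Finset.sum_congr rfl fun b _ => by ring
  rw [hmv]
  have hds : u ⬝ᵥ (∑ j, τ j • (Matrix.vecMulVec (ξ j) (ξ j) *ᵥ u))
      = ∑ j, τ j * (u ⬝ᵥ (Matrix.vecMulVec (ξ j) (ξ j) *ᵥ u)) := by
    simp only [dotProduct, Finset.sum_apply, Pi.smul_apply, smul_eq_mul, Finset.mul_sum]
    rw [Finset.sum_comm]
    refine Finset.sum_congr rfl fun j _ => Finset.sum_congr rfl fun k _ => by ring
  rw [hds]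
  refine Finset.sum_congr rfl fun j _ => ?_
  congr 1
  simp only [dotProduct, mulVec, vecMulVec_apply, sq]
  rw [Finset.sum_mul]
  refine Finset.sum_congr rfl fun k _ => ?_
  rw [Finset.mul_sum, Finset.mul_sum]
  refine Finset.sum_congr rfl fun l _ => ?_
  simp only [hu]
  ring

lemma unit_norm {d : ℕ} {X : Matrix (Fin d) (Fin d) ℝ} (hX : X.IsHermitian) (j : Fin d) :
    ∑ k, hX.eigenvectorBasis j k ^ 2 = 1 := by
  have h := ortho_dot hX j j
  simp only [if_true, eq_self_iff_true] at h
  simp only [sq]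
  exact h

lemma sum_rpow_le {ι : Type*} (s : Finset ι) (a : ι → ℝ) (ha : ∀ i ∈ s, 0 ≤ a i)
    {q : ℝ} (hq : 1 ≤ q) : ∑ i ∈ s, a i ^ q ≤ (∑ i ∈ s, a i) ^ q := by
  have hS : 0 ≤ ∑ i ∈ s, a i := Finset.sum_nonneg ha
  have hqne : (1 : ℝ) + (q - 1) ≠ 0 := by intro h; simp at h; linarith
  have key : ∀ i ∈ s, a i ^ q ≤ a i * (∑ i ∈ s, a i) ^ (q - 1) := by
    intro i hi
    rcases eq_or_lt_of_le (ha i hi) with h0 | h0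
    · rw [← h0, Real.zero_rpow (by linarith), zero_mul]
    · have h1 : a i ^ q = a i * a i ^ (q - 1) := by
        have := Real.rpow_add' (le_of_lt h0) hqne
        rw [show (1:ℝ) + (q-1) = q by ring] at this
        rw [this, Real.rpow_one]
      rw [h1]
      have h2 : a i ^ (q-1) ≤ (∑ i ∈ s, a i) ^ (q-1) :=
        Real.rpow_le_rpow (le_of_lt h0) (Finset.single_le_sum ha hi) (by linarith)
      exact mul_le_mul_of_nonneg_left h2 (le_of_lt h0)
  calc ∑ i ∈ s, a i ^ q ≤ ∑ i ∈ s, a i * (∑ i ∈ s, a i) ^ (q-1) := Finset.sum_le_sum key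
    _ = (∑ i ∈ s, a i) * (∑ i ∈ s, a i) ^ (q-1) := by rw [← Finset.sum_mul]
    _ = (∑ i ∈ s, a i) ^ q := by
        rw [show (∑ i ∈ s, a i) * (∑ i ∈ s, a i) ^ (q-1)
          = (∑ i ∈ s, a i) ^ (1:ℝ) * (∑ i ∈ s, a i) ^ (q-1) by rw [Real.rpow_one]]
        rw [← Real.rpow_add' hS hqne, show (1:ℝ) + (q-1) = q by ring]

lemma jensen_low {d : ℕ} (hd : 0 < d) (a : Fin d → ℝ) (ha : ∀ i, 0 ≤ a i) {q : ℝ} (hq : 1 ≤ q) :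
    (d : ℝ) ^ (-(q - 1)) * (∑ i, a i) ^ q ≤ ∑ i, a i ^ q := by
  have hd' : (0 : ℝ) < d := by exact_mod_cast hd
  have h := Real.rpow_arith_mean_le_arith_mean_rpow Finset.univ (fun _ => (d : ℝ)⁻¹) a
    (fun i _ => by positivity) (by simp [Finset.card_univ]; field_simp) (fun i _ => ha i) hq
  have hL : (∑ i, (d:ℝ)⁻¹ * a i) = (d:ℝ)⁻¹ * ∑ i, a i := by rw [Finset.mul_sum]
  rw [hL] at h
  have hR : (∑ i, (d:ℝ)⁻¹ * a i ^ q) = (d:ℝ)⁻¹ * ∑ i, a i ^ q := by rw [Finset.mul_sum]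
  rw [hR] at h
  have hmul : ((d:ℝ)⁻¹ * ∑ i, a i) ^ q = (d:ℝ) ^ (-q) * (∑ i, a i) ^ q := by
    rw [Real.mul_rpow (by positivity) (Finset.sum_nonneg fun i _ => ha i),
      Real.inv_rpow (le_of_lt hd'), ← Real.rpow_neg (le_of_lt hd')]
  rw [hmul] at h
  have := mul_le_mul_of_nonneg_left h (le_of_lt hd')
  calc (d : ℝ) ^ (-(q - 1)) * (∑ i, a i) ^ q
      = (d:ℝ) * ((d:ℝ) ^ (-q) * (∑ i, a i) ^ q) := by
        rw [← mul_assoc]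
        congr 1
        rw [show -(q-1) = 1 + -q by ring, Real.rpow_add hd', Real.rpow_one]
    _ ≤ (d:ℝ) * ((d:ℝ)⁻¹ * ∑ i, a i ^ q) := this
    _ = ∑ i, a i ^ q := by field_simp

lemma eNorm_rpow {d : ℕ} (v : Fin d → ℝ) (p : ℝ) :
    eNorm v ^ p = (∑ i, v i ^ 2) ^ (p / 2) := by
  have h : (0:ℝ) ≤ ∑ i, v i ^ 2 := Finset.sum_nonneg fun i _ => sq_nonneg _
  rw [eNorm, Real.sqrt_eq_rpow, ← Real.rpow_mul h]
  congr 1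
  ring

theorem matOmega_compatible {d : ℕ} (p pbar : ℝ) (hp : 2 < p) (hpbar : 1 ≤ pbar)
    (w : (Fin d → ℝ) → ℝ)
    (hbound : ∀ ξ, eNorm ξ ^ p ≤ w ξ ∧ w ξ ≤ pbar * eNorm ξ ^ p)
    (X : Matrix (Fin d) (Fin d) ℝ) (hX : X.IsHermitian) :
    (d : ℝ) ^ (-(p / 2 - 1)) * (∑ j, |hX.eigenvalues j|) ^ (p / 2) ≤ matOmega w X ∧
    matOmega w X ≤ pbar * (∑ j, |hX.eigenvalues j|) ^ (p / 2) := by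
  have hq1 : (1:ℝ) ≤ p / 2 := by linarith
  have hq0 : (0:ℝ) < p / 2 := by linarith
  set S : Set ℝ := {s : ℝ | ∃ (ξ : Fin d → Fin d → ℝ) (τ : Fin d → ℝ),
    (∀ j, τ j = 1 ∨ τ j = -1) ∧
    X = ∑ j, τ j • Matrix.vecMulVec (ξ j) (ξ j) ∧
    s = ∑ j, w (ξ j)} with hS
  have hmO : matOmega w X = sInf S := rfl
  -- spectral member
  set ξ0 : Fin d → Fin d → ℝ :=
    fun j k => Real.sqrt |hX.eigenvalues j| * hX.eigenvectorBasis j k with hξ0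
  set τ0 : Fin d → ℝ := fun j => if 0 ≤ hX.eigenvalues j then 1 else -1 with hτ0
  have hmem : (∑ j, w (ξ0 j)) ∈ S := by
    refine ⟨ξ0, τ0, fun j => by by_cases h : 0 ≤ hX.eigenvalues j <;> simp [hτ0, h], ?_, rfl⟩
    rw [spectral_sum hX]
    refine Finset.sum_congr rfl fun j _ => ?_
    ext i k
    simp only [Matrix.smul_apply, vecMulVec_apply, smul_eq_mul, hξ0, hτ0,
      PiLp.toLp_apply]
    by_cases h : 0 ≤ hX.eigenvalues j
    · rw [if_pos h, abs_of_nonneg h]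
      have habs : Real.sqrt (hX.eigenvalues j) * Real.sqrt (hX.eigenvalues j)
          = hX.eigenvalues j := Real.mul_self_sqrt h
      linear_combination (-(hX.eigenvectorBasis j i * hX.eigenvectorBasis j k)) * habs
    · rw [if_neg h, abs_of_neg (lt_of_not_ge h)]
      have habs : Real.sqrt (-hX.eigenvalues j) * Real.sqrt (-hX.eigenvalues j)
          = -hX.eigenvalues j := Real.mul_self_sqrt (by linarith [lt_of_not_ge h])
      linear_combination (hX.eigenvectorBasis j i * hX.eigenvectorBasis j k) * habs
  have hne : S.Nonempty := ⟨_, hmem⟩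
  -- nonnegativity of members
  have hbdd : ∀ s ∈ S, (0:ℝ) ≤ s := by
    rintro s ⟨ξ, τ, hτ, hdec, rfl⟩
    exact Finset.sum_nonneg fun j _ =>
      le_trans (Real.rpow_nonneg (Real.sqrt_nonneg _) p) (hbound (ξ j)).1
  constructor
  · -- lower bound
    rw [hmO]
    apply le_csInf hne
    rintro s ⟨ξ, τ, hτ, hdec, rfl⟩
    rcases Nat.eq_zero_or_pos d with hd | hd
    · subst hd
      simp only [Finset.univ_eq_empty, Finset.sum_empty, Real.zero_rpow (ne_of_gt hq0), mul_zero]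
      exact le_refl 0
    -- trace norm bound
    have key1 : ∑ i, |hX.eigenvalues i| ≤ ∑ j, ∑ k, (ξ j k) ^ 2 := by
      have step1 : ∀ i, |hX.eigenvalues i|
          ≤ ∑ j, (∑ k, hX.eigenvectorBasis i k * ξ j k) ^ 2 := by
        intro i
        rw [eig_eq hX ξ τ hdec i]
        calc |∑ j, τ j * (∑ k, hX.eigenvectorBasis i k * ξ j k) ^ 2|
            ≤ ∑ j, |τ j * (∑ k, hX.eigenvectorBasis i k * ξ j k) ^ 2| :=
              Finset.abs_sum_le_sum_abs _ _
          _ = ∑ j, (∑ k, hX.eigenvectorBasis i k * ξ j k) ^ 2 := by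
              refine Finset.sum_congr rfl fun j _ => ?_
              rw [abs_mul]
              rcases hτ j with h | h <;>
                simp [h, abs_of_nonneg (sq_nonneg (∑ k, hX.eigenvectorBasis i k * ξ j k))]
      calc ∑ i, |hX.eigenvalues i|
          ≤ ∑ i, ∑ j, (∑ k, hX.eigenvectorBasis i k * ξ j k) ^ 2 :=
            Finset.sum_le_sum fun i _ => step1 i
        _ = ∑ j, ∑ i, (∑ k, hX.eigenvectorBasis i k * ξ j k) ^ 2 := Finset.sum_comm
        _ = ∑ j, ∑ k, (ξ j k) ^ 2 :=
            Finset.sum_congr rfl fun j _ => parseval hX (ξ j)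
    -- chain of inequalities
    have step2 : ∑ j, (∑ k, (ξ j k) ^ 2) ^ (p/2) ≤ ∑ j, w (ξ j) :=
      Finset.sum_le_sum fun j _ => by rw [← eNorm_rpow]; exact (hbound (ξ j)).1
    have step3 : (d : ℝ) ^ (-(p/2 - 1)) * (∑ j, ∑ k, (ξ j k) ^ 2) ^ (p/2)
        ≤ ∑ j, (∑ k, (ξ j k) ^ 2) ^ (p/2) :=
      jensen_low hd _ (fun j => Finset.sum_nonneg fun k _ => sq_nonneg _) hq1
    have step4 : (∑ i, |hX.eigenvalues i|) ^ (p/2) ≤ (∑ j, ∑ k, (ξ j k) ^ 2) ^ (p/2) :=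
      Real.rpow_le_rpow (Finset.sum_nonneg fun i _ => abs_nonneg _) key1 (le_of_lt hq0)
    have hdpos : (0:ℝ) ≤ (d : ℝ) ^ (-(p/2 - 1)) := Real.rpow_nonneg (Nat.cast_nonneg d) _
    calc (d : ℝ) ^ (-(p/2 - 1)) * (∑ i, |hX.eigenvalues i|) ^ (p/2)
        ≤ (d : ℝ) ^ (-(p/2 - 1)) * (∑ j, ∑ k, (ξ j k) ^ 2) ^ (p/2) :=
          mul_le_mul_of_nonneg_left step4 hdpos
      _ ≤ ∑ j, (∑ k, (ξ j k) ^ 2) ^ (p/2) := step3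
      _ ≤ ∑ j, w (ξ j) := step2
  · -- upper bound
    rw [hmO]
    have h1 : sInf S ≤ ∑ j, w (ξ0 j) := csInf_le ⟨0, hbdd⟩ hmem
    refine le_trans h1 ?_
    have hval : ∀ j, ∑ k, (ξ0 j k) ^ 2 = |hX.eigenvalues j| := by
      intro j
      simp only [hξ0, mul_pow]
      rw [← Finset.mul_sum, unit_norm hX j, mul_one, Real.sq_sqrt (abs_nonneg _)]
    calc ∑ j, w (ξ0 j) ≤ ∑ j, pbar * |hX.eigenvalues j| ^ (p/2) := by
          refine Finset.sum_le_sum fun j _ => ?_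
          have := (hbound (ξ0 j)).2
          rwa [eNorm_rpow, hval j] at this
      _ = pbar * ∑ j, |hX.eigenvalues j| ^ (p/2) := by rw [Finset.mul_sum]
      _ ≤ pbar * (∑ j, |hX.eigenvalues j|) ^ (p/2) := by
          refine mul_le_mul_of_nonneg_left ?_ (by linarith)
          exact sum_rpow_le _ _ (fun i _ => abs_nonneg _) hq1
end
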